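/- Let N : ℕ, f ∈ ℂ, g : Fin N → ℂ, η : ℝ with 0 ≤ η, and let A be a finite subset of Fin N. Define ω⋆ : Fin N → ℂ by ω⋆ i = η * exp(-I * (arg (g i) - arg f)) for i ∈ A and ω⋆ i = exp(-I * (arg (g i) - arg f)) for i ∉ A (where arg denotes the complex argument). Then ‖f + ∑_{i : Fin N} ω⋆ i * g i‖ = ‖f‖ + η * ∑_{i ∈ A} ‖g i‖ + ∑_{i ∉ A} ‖g i‖. -/

import Mathlib

open Complex

lemma phase_align (z f : ℂ) :
    Complex.exp (-I * ((Complex.arg z : ℂ) - (Complex.arg f : ℂ))) * z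
      = (‖z‖ : ℂ) * Complex.exp ((Complex.arg f : ℂ) * I) := by
  have hz : z = (‖z‖ : ℂ) * Complex.exp ((Complex.arg z : ℂ) * I) := by
    exact (Complex.norm_mul_exp_arg_mul_I z).symm
  nth_rewrite 2 [hz]
  rw [show Complex.exp (-I * ((Complex.arg z : ℂ) - (Complex.arg f : ℂ))) *
      ((‖z‖ : ℂ) * Complex.exp ((Complex.arg z : ℂ) * I))
      = (‖z‖ : ℂ) * Complex.exp ((Complex.arg z : ℂ) * I + -I * ((Complex.arg z : ℂ) - (Complex.arg f : ℂ)))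
    from by rw [Complex.exp_add]; ring]
  congr 1
  ring

/-- The phase-aligned, maximally amplified coefficients achieve the
triangle-inequality upper bound with equality. -/
theorem phase_aligned_coefficients_achieve_bound (N : ℕ) (f : ℂ) (g : Fin N → ℂ)
    (η : ℝ) (hη : 0 ≤ η) (A : Finset (Fin N))
    (ωstar : Fin N → ℂ)
    (hωA : ∀ i ∈ A, ωstar i = (η : ℂ) * Complex.exp (-I * ((Complex.arg (g i) : ℂ) - (Complex.arg f : ℂ))))
    (hωAc : ∀ i ∉ A, ωstar i = Complex.exp (-I * ((Complex.arg (g i) : ℂ) - (Complex.arg f : ℂ)))) :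
    ‖f + ∑ i : Fin N, ωstar i * g i‖ =
      ‖f‖ + η * ∑ i ∈ A, ‖g i‖ + ∑ i ∈ Aᶜ, ‖g i‖ := by
  set r : Fin N → ℝ := fun i => (if i ∈ A then η else 1) * ‖g i‖ with hr
  have hterm : ∀ i : Fin N, ωstar i * g i = (r i : ℂ) * Complex.exp ((Complex.arg f : ℂ) * I) := by
    intro i
    by_cases hi : i ∈ A
    · rw [hωA i hi, hr]
      simp only [hi, if_pos]
      push_cast
      rw [mul_assoc, phase_align]
      ring
    · rw [hωAc i hi, hr]
      simp only [hi, if_neg, not_false_iff]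
      push_cast
      rw [phase_align]
      ring
  have hf : f = (‖f‖ : ℂ) * Complex.exp ((Complex.arg f : ℂ) * I) := by
    exact (Complex.norm_mul_exp_arg_mul_I f).symm
  have hsum : f + ∑ i : Fin N, ωstar i * g i
      = ((‖f‖ + ∑ i : Fin N, r i : ℝ) : ℂ) * Complex.exp ((Complex.arg f : ℂ) * I) := by
    rw [Finset.sum_congr rfl (fun i _ => hterm i)]
    rw [← Finset.sum_mul]
    push_cast
    rw [add_mul, ← hf]
  have hrnn : 0 ≤ ∑ i : Fin N, r i := by
    apply Finset.sum_nonneg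
    intro i _
    dsimp [r]
    positivity
  have hsplit : ∑ i : Fin N, r i = η * ∑ i ∈ A, ‖g i‖ + ∑ i ∈ Aᶜ, ‖g i‖ := by
    rw [← Finset.sum_add_sum_compl A]
    rw [Finset.mul_sum]
    congr 1
    · exact Finset.sum_congr rfl fun i hi => by simp [r, hi]
    · exact Finset.sum_congr rfl fun i hi => by
        simp [r, Finset.mem_compl.mp hi]
  rw [hsum, norm_mul, Complex.norm_exp_ofReal_mul_I, mul_one, Complex.norm_real,
    Real.norm_of_nonneg (by positivity), hsplit, add_assoc]
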